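/- If an aggregation function agg satisfies Balance (agg(A,S) = 0 whenever Core(A) = Core(S), and agg is invariant under replacing A, S by balanced multisets) and the influence function infl satisfies Balance (infl(b, 0) = b), then the induced modular semantics satisfies edge-stability: for any argument α, if every incoming edge r of α has weight w(r) = 0, then σ^(i)(α) = τ(α) for every iteration i, and hence σ(α) = τ(α). -/
import Mathlib


open Set

structure QBAF (A : Type*) [DecidableEq A] where
  att : Finset (A × A)
  sup : Finset (A × A)
  disj : Disjoint att sup
  tau : A → ℝ
  w : A × A → ℝ

namespace QBAF

variable {A : Type*} [DecidableEq A]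

/-- The set of all edges (attacks and supports). -/
def edges (Q : QBAF A) : Finset (A × A) := Q.att ∪ Q.sup

/-- Multiset of edge-weighted attacker strengths of `α`. -/
def attMS (Q : QBAF A) (σ : A → ℝ) (α : A) : Multiset ℝ :=
  (Q.att.filter (fun r => r.2 = α)).val.map (fun r => σ r.1 * Q.w r)

/-- Multiset of edge-weighted supporter strengths of `α`. -/
def supMS (Q : QBAF A) (σ : A → ℝ) (α : A) : Multiset ℝ :=
  (Q.sup.filter (fun r => r.2 = α)).val.map (fun r => σ r.1 * Q.w r)

/-- Iterates of the modular-semantics update procedure: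
`σ⁰ = τ`, `σ^(i+1)(α) = infl (τ α) (agg A^σ_α S^σ_α)`. -/
def iter (agg : Multiset ℝ → Multiset ℝ → ℝ) (infl : ℝ → ℝ → ℝ)
    (Q : QBAF A) : ℕ → A → ℝ
  | 0 => Q.tau
  | i + 1 => fun α =>
      infl (Q.tau α)
        (agg (Q.attMS (iter agg infl Q i) α) (Q.supMS (iter agg infl Q i) α))

/-- Replace the edge weight function. -/
def setW (Q : QBAF A) (w' : A × A → ℝ) : QBAF A := { Q with w := w' }

/-- Replace the base score function. -/
def setTau (Q : QBAF A) (τ' : A → ℝ) : QBAF A := { Q with tau := τ' }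

/-- For acyclic EW-QBAFs the iteration stabilizes after `card A` steps, so this is
the strength obtained by a forward pass in topological order. -/
def strength [Fintype A] (agg : Multiset ℝ → Multiset ℝ → ℝ) (infl : ℝ → ℝ → ℝ)
    (Q : QBAF A) : A → ℝ := iter agg infl Q (Fintype.card A)

end QBAF

/-- `Core` of a multiset of reals: the sub-multiset of nonzero elements. -/
noncomputable def mcore (S : Multiset ℝ) : Multiset ℝ := S.filter (fun x => x ≠ 0)

/-- There is a (nonempty) directed path from `a` to `b` using edges of `R`. -/
def HasPath {A : Type*} (R : Finset (A × A)) (a b : A) : Prop :=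
  Relation.TransGen (fun x y => (x, y) ∈ R) a b

/-- `p` is a directed path from `a` to `b`: a nonempty list of consecutive edges of `R`. -/
def IsPath {A : Type*} (R : Finset (A × A)) (a b : A) (p : List (A × A)) : Prop :=
  p ≠ [] ∧ (∀ e ∈ p, e ∈ R) ∧ List.Chain' (fun e f => e.2 = f.1) p ∧
    p.head?.map Prod.fst = some a ∧ p.getLast?.map Prod.snd = some b

/-- The EW-QBAF is acyclic. -/
def QAcyclic {A : Type*} [DecidableEq A] (Q : QBAF A) : Prop :=
  ∀ α, ¬ HasPath Q.edges α α

/-- A gradual semantics assigning strengths to arguments of any EW-QBAF. -/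
abbrev Sem (A : Type*) [DecidableEq A] := QBAF A → A → ℝ

/-- `S` dominates `T`: either both cores are empty, or there is a sub-multiset of
`Core S` in bijection `f` with `Core T` such that `x ≤ f x` (the bijection encoded
as a multiset of pairs). -/
def MDominates (S T : Multiset ℝ) : Prop :=
  (mcore S = 0 ∧ mcore T = 0) ∨
    ∃ P : Multiset (ℝ × ℝ), P.map Prod.fst = mcore T ∧ P.map Prod.snd ≤ mcore S ∧
      ∀ q ∈ P, q.1 ≤ q.2

/-- Monotonicity of an aggregation function. -/
def AggMonotone (agg : Multiset ℝ → Multiset ℝ → ℝ) : Prop :=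
  (∀ A S, MDominates A S → agg A S ≤ 0) ∧
  (∀ A S, MDominates S A → 0 ≤ agg A S) ∧
  (∀ A A' S, MDominates A A' → agg A S ≤ agg A' S) ∧
  (∀ A S S', MDominates S S' → agg A S' ≤ agg A S)

/-- Monotonicity of an influence function. -/
def InflMonotone (infl : ℝ → ℝ → ℝ) : Prop :=
  (∀ b a, a < 0 → infl b a ≤ b) ∧
  (∀ b a, 0 < a → b ≤ infl b a) ∧
  (∀ a b₁ b₂, b₁ ≤ b₂ → infl b₁ a ≤ infl b₂ a) ∧
  (∀ b a₁ a₂, a₁ ≤ a₂ → infl b a₁ ≤ infl b a₂)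

/-- Edge-monotonicity of a semantics: increasing the weight of a single attack
(support) edge does not increase (decrease) the strength of its target. -/
def EdgeMono {A : Type*} [DecidableEq A] (σ : Sem A) : Prop :=
  ∀ (Q : QBAF A) (r : A × A) (w' : A × A → ℝ),
    r ∈ Q.edges → Q.w r ≤ w' r → (∀ t, t ≠ r → w' t = Q.w t) →
    (r ∈ Q.att → σ (Q.setW w') r.2 ≤ σ Q r.2) ∧
    (r ∈ Q.sup → σ Q r.2 ≤ σ (Q.setW w') r.2)

/-- (Base-score) monotonicity of a semantics: if `(β,α)` is an edge and the unique
path from `β` to `α`, then increasing `τ(β)` changes `σ(α)` sign-correctly. -/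
def BaseMono {A : Type*} [DecidableEq A] (σ : Sem A) : Prop :=
  ∀ (Q : QBAF A) (β α : A) (τ' : A → ℝ),
    β ≠ α → (β, α) ∈ Q.edges → (∃! p, IsPath Q.edges β α p) →
    Q.tau β ≤ τ' β → (∀ γ, γ ≠ β → τ' γ = Q.tau γ) →
    ((β, α) ∈ Q.att → σ (Q.setTau τ') α ≤ σ Q α) ∧
    ((β, α) ∈ Q.sup → σ Q α ≤ σ (Q.setTau τ') α)

/-- Edge-neutrality of a semantics: adding a fresh edge of weight `0` leaves the
strength of its target unchanged. -/
def EdgeNeutralSem {A : Type*} [DecidableEq A] (σ : Sem A) : Prop :=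
  ∀ (Q Q' : QBAF A) (β α : A),
    Q'.tau = Q.tau → Q.att ⊆ Q'.att → Q.sup ⊆ Q'.sup →
    Q'.edges = insert (β, α) Q.edges →
    (∀ r ∈ Q.edges, Q'.w r = Q.w r) → Q'.w (β, α) = 0 →
    σ Q' α = σ Q α

/-- Edge-stability of a semantics: if all incoming edges of `α` have weight `0`,
the strength of `α` is its base score. -/
def EdgeStable {A : Type*} [DecidableEq A] (σ : Sem A) : Prop :=
  ∀ (Q : QBAF A) (α : A), (∀ r ∈ Q.edges, r.2 = α → Q.w r = 0) → σ Q α = Q.tau α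

/-- `s` is attainable for `α` by varying edge weights in `[0,1]`. -/
def Attainable {A : Type*} [DecidableEq A] (σ : Sem A) (Q : QBAF A) (α : A) (s : ℝ) : Prop :=
  ∃ w' : A × A → ℝ, (∀ r, w' r ∈ Set.Icc (0 : ℝ) 1) ∧ σ (Q.setW w') α = s

/-- The gradient-based relation attribution explanation `∇_{r→α}^σ`: the derivative
of the strength of `α` with respect to the weight of edge `r`. -/
noncomputable def grae {A : Type*} [DecidableEq A] (σ : Sem A) (Q : QBAF A)
    (r : A × A) (α : A) : ℝ :=
  deriv (fun δ => σ (Q.setW (Function.update Q.w r δ)) α) (Q.w r)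

/-- Balance of an aggregation function. -/
def AggBalance (agg : Multiset ℝ → Multiset ℝ → ℝ) : Prop :=
  (∀ A S, mcore A = mcore S → agg A S = 0) ∧
  (∀ A A' S S', mcore A = mcore A' → mcore S = mcore S' → agg A S = agg A' S')

/-- Balance of an influence function. -/
def InflBalance (infl : ℝ → ℝ → ℝ) : Prop := ∀ b, infl b 0 = b

/-- **Edge-stability**: if `agg` and `infl` satisfy their Balance properties, and all
edges incoming to `α` have weight `0`, then every iterate of the strength of `α`
equals its base score, hence so does the limit. -/
theorem edge_stability {A : Type*} [DecidableEq A]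
    (agg : Multiset ℝ → Multiset ℝ → ℝ) (infl : ℝ → ℝ → ℝ)
    (hagg : AggBalance agg) (hinfl : InflBalance infl)
    (Q : QBAF A) (α : A)
    (hw : ∀ r ∈ Q.edges, r.2 = α → Q.w r = 0) :
    ∀ i : ℕ, QBAF.iter agg infl Q i α = Q.tau α := by
  intro i
  induction i with
  | zero => rfl
  | succ n ih =>
    have hcore : ∀ (M : Multiset ℝ), (∀ x ∈ M, x = 0) → mcore M = 0 := by
      intro M hM
      unfold mcore
      rw [Multiset.filter_eq_nil]
      intro x hx
      simpa using hM x hx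
    have hatt : mcore (Q.attMS (QBAF.iter agg infl Q n) α) = 0 := by
      apply hcore
      intro x hx
      simp only [QBAF.attMS, Multiset.mem_map] at hx
      obtain ⟨r, hr, rfl⟩ := hx
      rw [Finset.mem_val, Finset.mem_filter] at hr
      have : Q.w r = 0 := hw r (Finset.mem_union_left _ hr.1) hr.2
      rw [this, mul_zero]
    have hsup : mcore (Q.supMS (QBAF.iter agg infl Q n) α) = 0 := by
      apply hcore
      intro x hx
      simp only [QBAF.supMS, Multiset.mem_map] at hx
      obtain ⟨r, hr, rfl⟩ := hx
      rw [Finset.mem_val, Finset.mem_filter] at hr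
      have : Q.w r = 0 := hw r (Finset.mem_union_right _ hr.1) hr.2
      rw [this, mul_zero]
    show infl (Q.tau α) (agg _ _) = Q.tau α
    rw [hagg.1 _ _ (hatt.trans hsup.symm), hinfl]
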